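/- Let S be a semigroup, A a finite alphabet, and φ : A → S a map such that the induced map φ⁺ on nonempty words (sending a₁⋯aₙ to φ(a₁)⋯φ(aₙ)) is surjective. For x ∈ S let λ_A(x) be the minimal length of a nonempty word over A representing x, and let σ_A(n) = |{s ∈ S : λ_A(s) = n}| (which is finite since A is finite). If S admits a robust semigroup Markov language over A, then the formal power series Σ_{n≥0} σ_A(n) xⁿ over ℚ is rational: there exist polynomials p, q ∈ ℚ[x] with q having nonzero constant term such that q · Σ_{n≥0} σ_A(n) xⁿ = p in ℚ⟦x⟧. -/

import Mathlib

open Function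

/-- A language is regular if it is accepted by a deterministic finite automaton
with a finite state set. -/
def RegularLang {A : Type} (L : Language A) : Prop :=
  ∃ (Q : Type) (_ : Fintype Q) (M : DFA A Q), M.accepts = L

/-- The product of a nonempty word under the letter-assignment `φ`; the empty
word is sent to `none`. This is the induced map `φ⁺` on nonempty words. -/
def prodPlus {A S : Type} [Semigroup S] (φ : A → S) : List A → Option S
  | [] => none
  | a :: w => some (w.foldl (fun s b => s * φ b) (φ a))

/-- The induced monoid homomorphism `φ*` from the free monoid of words. -/
def monProd {A M : Type} [Monoid M] (φ : A → M) (w : List A) : M :=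
  (w.map φ).prod

/-- A semigroup Markov language for `S` over `A` (with respect to `φ`): a regular,
`+`-prefix-closed language of nonempty words mapping bijectively onto `S` under `φ⁺`. -/
structure IsSgMarkovLang {A S : Type} [Semigroup S] (φ : A → S) (L : Language A) : Prop where
  regular : RegularLang L
  not_empty_mem : [] ∉ L
  plus_prefix_closed : ∀ u v : List A, u ≠ [] → v ≠ [] → u ++ v ∈ L → u ∈ L
  unique_rep : ∀ s : S, ∃! w : List A, w ∈ L ∧ prodPlus φ w = some s

/-- A robust semigroup Markov language: additionally every word of `L` has minimal
length among (nonempty) words representing the same element. -/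
structure IsRobustSgMarkovLang {A S : Type} [Semigroup S] (φ : A → S) (L : Language A)
    extends IsSgMarkovLang φ L : Prop where
  min_length : ∀ w ∈ L, ∀ v : List A, prodPlus φ v = prodPlus φ w → w.length ≤ v.length

/-- A monoid Markov language for `M` over `A` (with respect to `φ`): a regular,
prefix-closed language mapping bijectively onto `M` under `φ*`. -/
structure IsMonMarkovLang {A M : Type} [Monoid M] (φ : A → M) (L : Language A) : Prop where
  regular : RegularLang L
  prefix_closed : ∀ u v : List A, u ++ v ∈ L → u ∈ L
  unique_rep : ∀ m : M, ∃! w : List A, w ∈ L ∧ monProd φ w = m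

/-- A robust monoid Markov language: additionally every word of `L` has minimal
length among words representing the same element. -/
structure IsRobustMonMarkovLang {A M : Type} [Monoid M] (φ : A → M) (L : Language A)
    extends IsMonMarkovLang φ L : Prop where
  min_length : ∀ w ∈ L, ∀ v : List A, monProd φ v = monProd φ w → w.length ≤ v.length

/-- `S` is Markov as a semigroup. -/
def SgMarkov (S : Type) [Semigroup S] : Prop :=
  ∃ (A : Type) (_ : Fintype A) (φ : A → S),
    (∀ s : S, ∃ w : List A, prodPlus φ w = some s) ∧
    ∃ L : Language A, IsSgMarkovLang φ L

/-- `S` is robustly Markov (as a semigroup) with respect to some alphabet. -/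
def SgRobustlyMarkov (S : Type) [Semigroup S] : Prop :=
  ∃ (A : Type) (_ : Fintype A) (φ : A → S),
    (∀ s : S, ∃ w : List A, prodPlus φ w = some s) ∧
    ∃ L : Language A, IsRobustSgMarkovLang φ L

/-- `S` is strongly Markov (as a semigroup). -/
def SgStronglyMarkov (S : Type) [Semigroup S] : Prop :=
  ∀ (A : Type) [Fintype A] (φ : A → S),
    (∀ s : S, ∃ w : List A, prodPlus φ w = some s) →
    ∃ L : Language A, IsRobustSgMarkovLang φ L

/-- `M` is Markov as a monoid. -/
def MonMarkov (M : Type) [Monoid M] : Prop :=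
  ∃ (A : Type) (_ : Fintype A) (φ : A → M),
    Surjective (monProd φ) ∧ ∃ L : Language A, IsMonMarkovLang φ L

/-- `M` is robustly Markov (as a monoid) with respect to some alphabet. -/
def MonRobustlyMarkov (M : Type) [Monoid M] : Prop :=
  ∃ (A : Type) (_ : Fintype A) (φ : A → M),
    Surjective (monProd φ) ∧ ∃ L : Language A, IsRobustMonMarkovLang φ L

/-- `M` is strongly Markov (as a monoid). -/
def MonStronglyMarkov (M : Type) [Monoid M] : Prop :=
  ∀ (A : Type) [Fintype A] (φ : A → M),
    Surjective (monProd φ) →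
    ∃ L : Language A, IsRobustMonMarkovLang φ L


section DFACount

variable {A Q : Type} [Fintype A] [Fintype Q]

/-- number of words of length `n` leading from `i` into the accept set -/
noncomputable def dcount (M : DFA A Q) (n : ℕ) (i : Q) : ℕ :=
  Nat.card {f : Fin n → A // M.evalFrom i (List.ofFn f) ∈ M.accept}

/-- number of letters stepping `i` to `k` -/
noncomputable def tcount (M : DFA A Q) (i k : Q) : ℕ :=
  Nat.card {a : A // M.step i a = k}

lemma dcount_zero (M : DFA A Q) [DecidablePred (· ∈ M.accept)] (i : Q) :
    dcount M 0 i = if i ∈ M.accept then 1 else 0 := by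
  classical
  have h : ∀ f : Fin 0 → A, M.evalFrom i (List.ofFn f) = i := by
    intro f; simp [DFA.evalFrom]
  unfold dcount
  split_ifs with hi
  · rw [Nat.card_congr (Equiv.subtypeUnivEquiv (fun f => by rw [h f]; exact hi))]
    simp [Nat.card_eq_fintype_card]
  · have : IsEmpty {f : Fin 0 → A // M.evalFrom i (List.ofFn f) ∈ M.accept} :=
      ⟨fun ⟨f, hf⟩ => hi (by rwa [h f] at hf)⟩
    rw [Nat.card_eq_zero]
    exact Or.inl this

lemma dcount_succ (M : DFA A Q) (n : ℕ) (i : Q) :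
    dcount M (n + 1) i = ∑ k : Q, tcount M i k * dcount M n k := by
  classical
  have e : {f : Fin (n + 1) → A // M.evalFrom i (List.ofFn f) ∈ M.accept} ≃
      {p : A × (Fin n → A) // M.evalFrom (M.step i p.1) (List.ofFn p.2) ∈ M.accept} := by
    refine (Fin.consEquiv (fun _ => A)).symm.subtypeEquiv fun f => ?_
    rw [List.ofFn_succ]
    simp only [DFA.evalFrom, Fin.consEquiv_symm_apply, Fin.tail_def, List.foldl_cons]
  have h1 : dcount M (n + 1) i = ∑ a : A, dcount M n (M.step i a) := by
    rw [dcount, Nat.card_congr e, Nat.card_eq_fintype_card, Fintype.card_subtype,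
      Finset.card_filter, Fintype.sum_prod_type]
    refine Finset.sum_congr rfl fun a _ => ?_
    rw [dcount, Nat.card_eq_fintype_card, Fintype.card_subtype, Finset.card_filter]
  rw [h1, ← Finset.sum_fiberwise Finset.univ (fun a => M.step i a)
    (fun a => dcount M n (M.step i a))]
  refine Finset.sum_congr rfl fun k _ => ?_
  have : ∀ a ∈ Finset.univ.filter (fun a => M.step i a = k),
      dcount M n (M.step i a) = dcount M n k := by
    intro a ha
    rw [(Finset.mem_filter.mp ha).2]
  rw [Finset.sum_congr rfl this, Finset.sum_const, tcount, Nat.card_eq_fintype_card,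
    Fintype.card_subtype, smul_eq_mul]

end DFACount

section Markov

private lemma ofFn_get_cast {A : Type} {n : ℕ} (l : List A) (h : l.length = n) :
    List.ofFn (fun i : Fin n => l.get (Fin.cast h.symm i)) = l := by
  subst h; simp

variable {S A : Type} [Semigroup S] [Fintype A] {φ : A → S} {L : Language A}

private lemma prodPlus_isSome {w : List A} (hw : w ≠ []) : (prodPlus φ w).isSome := by
  cases w with
  | nil => exact absurd rfl hw
  | cons a w => rfl

private lemma lam_eq (h : IsRobustSgMarkovLang φ L) {w : List A} {s : S}
    (hw : w ∈ L) (hs : prodPlus φ w = some s) :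
    sInf {k : ℕ | ∃ v : List A, prodPlus φ v = some s ∧ v.length = k} = w.length := by
  refine le_antisymm (Nat.sInf_le ⟨w, hs, rfl⟩) (le_csInf ⟨w.length, w, hs, rfl⟩ ?_)
  rintro k ⟨v, hv, rfl⟩
  exact h.min_length w hw v (hv.trans hs.symm)

private lemma card_lam_eq (h : IsRobustSgMarkovLang φ L) (n : ℕ) :
    Nat.card {s : S //
        sInf {k : ℕ | ∃ w : List A, prodPlus φ w = some s ∧ w.length = k} = n} =
      Nat.card {w : List A // w ∈ L ∧ w.length = n} := by
  refine (Nat.card_eq_of_bijective (fun w => ?_) ⟨?_, ?_⟩).symm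
  · refine ⟨(prodPlus φ w.1).get (prodPlus_isSome fun hnil => h.not_empty_mem (hnil ▸ w.2.1)),
      ?_⟩
    rw [lam_eq h w.2.1 (Option.some_get _).symm, w.2.2]
  · rintro ⟨w₁, hw₁⟩ ⟨w₂, hw₂⟩ hF
    have hs : prodPlus φ w₁ = prodPlus φ w₂ := by
      rw [← Option.some_get (prodPlus_isSome (φ := φ) (fun hnil => h.not_empty_mem (hnil ▸ hw₁.1))),
        ← Option.some_get (prodPlus_isSome (φ := φ) (fun hnil => h.not_empty_mem (hnil ▸ hw₂.1)))]
      exact congrArg some (congrArg Subtype.val hF)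
    obtain ⟨u, -, hu⟩ := h.unique_rep ((prodPlus φ w₂).get
      (prodPlus_isSome (fun hnil => h.not_empty_mem (hnil ▸ hw₂.1))))
    have e1 : w₁ = u := hu w₁ ⟨hw₁.1, by rw [hs]; exact (Option.some_get _).symm⟩
    have e2 : w₂ = u := hu w₂ ⟨hw₂.1, (Option.some_get _).symm⟩
    exact Subtype.ext (e1.trans e2.symm)
  · rintro ⟨s, hsn⟩
    obtain ⟨w, ⟨hwL, hws⟩, -⟩ := h.unique_rep s
    have hlen : w.length = n := by rw [← lam_eq h hwL hws, hsn]
    refine ⟨⟨w, hwL, hlen⟩, Subtype.ext ?_⟩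
    have := Option.some_get (prodPlus_isSome (φ := φ)
      (fun hnil : w = [] => h.not_empty_mem (hnil ▸ hwL)))
    exact Option.some_injective S (this.trans hws)

private lemma card_words (L : Language A) (n : ℕ) :
    Nat.card {w : List A // w ∈ L ∧ w.length = n} =
      Nat.card {f : Fin n → A // List.ofFn f ∈ L} := by
  refine Nat.card_congr ⟨fun w => ⟨fun i => w.1.get (Fin.cast w.2.2.symm i),
      by rw [ofFn_get_cast w.1 w.2.2]; exact w.2.1⟩,
    fun f => ⟨List.ofFn f.1, f.2, List.length_ofFn⟩, ?_, ?_⟩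
  · rintro ⟨w, hw⟩
    exact Subtype.ext (ofFn_get_cast w hw.2)
  · rintro ⟨f, hf⟩
    refine Subtype.ext (funext fun i => ?_)
    simp [List.get_ofFn]

end Markov
/-- If a semigroup admits a robust semigroup Markov language over `A`, then its growth
series with respect to `A` is rational. -/
theorem stmt6 {S A : Type} [Semigroup S] [Fintype A] (φ : A → S)
    (hsurj : ∀ s : S, ∃ w : List A, prodPlus φ w = some s)
    (hL : ∃ L : Language A, IsRobustSgMarkovLang φ L) :
    ∃ p q : Polynomial ℚ, q.coeff 0 ≠ 0 ∧
      (q : PowerSeries ℚ) *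
        PowerSeries.mk (fun n : ℕ =>
          (Nat.card {s : S //
            sInf {k : ℕ | ∃ w : List A, prodPlus φ w = some s ∧ w.length = k} = n} : ℚ)) =
      (p : PowerSeries ℚ) := by
  classical
  obtain ⟨L, h⟩ := hL
  obtain ⟨Q, hQ, M, hM⟩ := h.regular
  letI := hQ
  set t : Q → Q → ℚ := fun i k => (tcount M i k : ℚ) with ht
  set Bp : Matrix Q Q (Polynomial ℚ) :=
    1 - Matrix.of fun i k => Polynomial.C (t i k) * Polynomial.X with hBp
  set Bs : Matrix Q Q (PowerSeries ℚ) :=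
    1 - Matrix.of fun i k => PowerSeries.C (t i k) * PowerSeries.X with hBs
  have hmap : Polynomial.coeToPowerSeries.ringHom.mapMatrix Bp = Bs := by
    rw [hBp, hBs, map_sub, map_one]
    congr 1
    ext i k
    simp only [RingHom.mapMatrix_apply, Matrix.map_apply, Matrix.of_apply,
      Polynomial.coeToPowerSeries.ringHom_apply, Polynomial.coe_mul, Polynomial.coe_C,
      Polynomial.coe_X]
  set G : Q → PowerSeries ℚ := fun k => PowerSeries.mk fun n => (dcount M n k : ℚ) with hG
  have hBG : Bs.mulVec G = fun i => if i ∈ M.accept then 1 else 0 := by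
    funext i
    have hv : Bs.mulVec G i = G i - PowerSeries.X * ∑ k : Q, PowerSeries.C (t i k) * G k := by
      rw [hBs, Matrix.sub_mulVec]
      simp only [Pi.sub_apply, Matrix.one_mulVec]
      congr 1
      simp only [Matrix.mulVec, dotProduct, Matrix.of_apply]
      rw [Finset.mul_sum]
      exact Finset.sum_congr rfl fun k _ => by ring
    rw [hv]
    refine PowerSeries.ext fun n => ?_
    cases n with
    | zero =>
      simp only [map_sub, PowerSeries.coeff_zero_X_mul, sub_zero, hG, PowerSeries.coeff_mk,
        apply_ite (PowerSeries.coeff 0), map_one, map_zero]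
      rw [dcount_zero]
      split_ifs <;> simp
    | succ m =>
      rw [map_sub, PowerSeries.coeff_succ_X_mul, map_sum]
      simp only [hG, PowerSeries.coeff_mk, PowerSeries.coeff_C_mul,
        apply_ite (PowerSeries.coeff (m + 1)), map_one, map_zero]
      rw [dcount_succ]
      push_cast
      split_ifs <;> simp [ht]
  have h2 : Bs.det • G = Bs.adjugate.mulVec (fun i => if i ∈ M.accept then 1 else 0) := by
    rw [← hBG, Matrix.mulVec_mulVec, Matrix.adjugate_mul, Matrix.smul_mulVec,
      Matrix.one_mulVec]
  have h3 : Bs.det * G M.start =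
      ∑ k ∈ Finset.univ.filter (· ∈ M.accept), Bs.adjugate M.start k := by
    have h4 := congrFun h2 M.start
    rw [Pi.smul_apply, smul_eq_mul] at h4
    rw [h4, Matrix.mulVec, dotProduct, Finset.sum_filter]
    exact Finset.sum_congr rfl fun k _ => by split_ifs <;> simp
  refine ⟨∑ k ∈ Finset.univ.filter (· ∈ M.accept), Bp.adjugate M.start k, Bp.det, ?_, ?_⟩
  · rw [Polynomial.coeff_zero_eq_eval_zero]
    have h5 : (Polynomial.evalRingHom (0 : ℚ)) Bp.det =
        ((Polynomial.evalRingHom (0 : ℚ)).mapMatrix Bp).det := RingHom.map_det _ _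
    have hone : (Polynomial.evalRingHom (0 : ℚ)).mapMatrix Bp = 1 := by
      rw [hBp, map_sub, map_one, sub_eq_self]
      ext i k
      simp [RingHom.mapMatrix_apply]
    have : Polynomial.eval 0 Bp.det = 1 := by
      rw [show Polynomial.eval 0 Bp.det = (Polynomial.evalRingHom (0 : ℚ)) Bp.det from rfl,
        h5, hone, Matrix.det_one]
    rw [this]
    exact one_ne_zero
  · have hF : PowerSeries.mk (fun n : ℕ =>
        (Nat.card {s : S //
          sInf {k : ℕ | ∃ w : List A, prodPlus φ w = some s ∧ w.length = k} = n} : ℚ)) =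
        G M.start := by
      refine PowerSeries.ext fun n => ?_
      simp only [hG, PowerSeries.coeff_mk]
      congr 1
      rw [card_lam_eq h n, card_words L n]
      exact Nat.card_congr (Equiv.subtypeEquivRight fun f => by
        rw [← hM, DFA.mem_accepts]; exact Iff.rfl)
    have hq : ((Bp.det : Polynomial ℚ) : PowerSeries ℚ) = Bs.det := by
      rw [← Polynomial.coeToPowerSeries.ringHom_apply, RingHom.map_det, hmap]
    have hp : ((∑ k ∈ Finset.univ.filter (· ∈ M.accept), Bp.adjugate M.start k :
        Polynomial ℚ) : PowerSeries ℚ) =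
        ∑ k ∈ Finset.univ.filter (· ∈ M.accept), Bs.adjugate M.start k := by
      rw [← Polynomial.coeToPowerSeries.ringHom_apply, map_sum]
      refine Finset.sum_congr rfl fun k _ => ?_
      rw [show Polynomial.coeToPowerSeries.ringHom (Bp.adjugate M.start k) =
        (Polynomial.coeToPowerSeries.ringHom.mapMatrix Bp.adjugate) M.start k from rfl,
        RingHom.map_adjugate, hmap]
    rw [hF, hq, h3, hp]
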